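/- arXiv:2104.08324 — 5 statements merged into one kernel-verified Lean document; each statement's English description precedes it below -/
import Mathlib

section
/- Let V be a p×p symmetric positive definite matrix and let Ṽ = diag(V) be the diagonal matrix with the same diagonal entries. Then tr(Ṽ V⁻¹) ≥ p. -/
open Matrix

lemma key_diag_inv {p : ℕ} (V : Matrix (Fin p) (Fin p) ℝ) (hV : V.PosDef) (i : Fin p) :
    1 ≤ V i i * V⁻¹ i i := by
  have hdet : IsUnit V.det := isUnit_iff_ne_zero.mpr hV.det_pos.ne'
  set x : Fin p → ℝ := Pi.single i 1 with hx
  set y : Fin p → ℝ := V⁻¹ *ᵥ x with hy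
  have hVy : V *ᵥ y = x := by
    rw [hy, mulVec_mulVec, mul_nonsing_inv V hdet, one_mulVec]
  have hinner : ∀ a b : Fin p → ℝ,
      @inner ℝ _ (Matrix.toInnerProductSpace V hV.posSemidef).toInner a b = a ⬝ᵥ (V *ᵥ b) := fun a b => by rw [dotProduct_comm]; rfl
  have hxy : @inner ℝ _ (Matrix.toInnerProductSpace V hV.posSemidef).toInner x y = 1 := by
    rw [hinner, hVy, hx]
    simp [dotProduct, Pi.single_apply]
  have hxx : @inner ℝ _ (Matrix.toInnerProductSpace V hV.posSemidef).toInner x x = V i i := by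
    rw [hinner, hx]
    simp [dotProduct, mulVec_single, Pi.single_apply]
  have hyy : @inner ℝ _ (Matrix.toInnerProductSpace V hV.posSemidef).toInner y y = V⁻¹ i i := by
    rw [hinner, hVy, hy]
    have hsym : V⁻¹.IsHermitian := hV.isHermitian.inv
    calc (V⁻¹ *ᵥ x) ⬝ᵥ x = x ⬝ᵥ (V⁻¹ᵀ *ᵥ x) := by
            rw [dotProduct_mulVec, vecMul_transpose, dotProduct_comm]
      _ = x ⬝ᵥ (V⁻¹ *ᵥ x) := by
            congr 1; rw [← conjTranspose_eq_transpose_of_trivial, hsym.eq]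
      _ = V⁻¹ i i := by simp [hx, dotProduct, mulVec_single, Pi.single_apply]
  have hcs := @real_inner_le_norm (Fin p → ℝ)
    (Matrix.toSeminormedAddCommGroup V hV.posSemidef) (Matrix.toInnerProductSpace V hV.posSemidef) x y
  have hnx := @real_inner_self_eq_norm_sq (Fin p → ℝ)
    (Matrix.toSeminormedAddCommGroup V hV.posSemidef) (Matrix.toInnerProductSpace V hV.posSemidef) x
  have hny := @real_inner_self_eq_norm_sq (Fin p → ℝ)
    (Matrix.toSeminormedAddCommGroup V hV.posSemidef) (Matrix.toInnerProductSpace V hV.posSemidef) y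
  rw [hxy] at hcs
  rw [hxx] at hnx
  rw [hyy] at hny
  set nx := @norm _ ((Matrix.toSeminormedAddCommGroup V hV.posSemidef)).toNorm x
  set ny := @norm _ ((Matrix.toSeminormedAddCommGroup V hV.posSemidef)).toNorm y
  nlinarith [hcs, hnx, hny]

/-- For a symmetric positive definite `V`, `tr(diag(V) · V⁻¹) ≥ p`. -/
theorem trace_diag_mul_inv_ge {p : ℕ} (V : Matrix (Fin p) (Fin p) ℝ) (hV : V.PosDef) :
    (p : ℝ) ≤ ((Matrix.diagonal fun i => V i i) * V⁻¹).trace := by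
  rw [Matrix.trace]
  have hdiag : ∀ i, ((Matrix.diagonal fun i => V i i) * V⁻¹).diag i = V i i * V⁻¹ i i := by
    intro i; simp [Matrix.diag, Matrix.diagonal_mul]
  calc (p : ℝ) = ∑ _i : Fin p, (1:ℝ) := by simp
    _ ≤ ∑ i, V i i * V⁻¹ i i := Finset.sum_le_sum fun i _ => key_diag_inv V hV i
    _ = _ := by rw [Finset.sum_congr rfl fun i _ => (hdiag i).symm]
end

section
/- Let V be p×p symmetric positive definite, Ṽ = diag(V), θ₀ ≠ θ* ∈ ℝ^p, and ε > 0. Then α̃* := p / (tr(Ṽ V⁻¹) + ε(θ₀−θ*)ᵀṼ(θ₀−θ*)) satisfies 0 < α̃* < 1. -/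
open Matrix

/-- Key inequality: for positive definite `V`, `V i i * V⁻¹ i i ≥ 1`,
by Cauchy–Schwarz with respect to the inner product induced by `V`. -/
lemma one_le_diag_mul_inv_diag {p : ℕ} {V : Matrix (Fin p) (Fin p) ℝ}
    (hV : V.PosDef) (i : Fin p) : 1 ≤ V i i * V⁻¹ i i := by
  have hS := hV.posSemidef
  obtain ⟨S, hS0, hSS'⟩ : ∃ S : Matrix (Fin p) (Fin p) ℝ, S.PosSemidef ∧ S * S = V := by
    open scoped MatrixOrder in
    exact ⟨CFC.sqrt V, Matrix.nonneg_iff_posSemidef.mp (CFC.sqrt_nonneg V),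
      CFC.sqrt_mul_sqrt_self V (Matrix.nonneg_iff_posSemidef.mpr hS)⟩
  have hSt : Sᵀ = S := by
    rw [← Matrix.conjTranspose_eq_transpose_of_trivial]
    exact hS0.1
  have hSS : S * S = V := hSS'
  have hVV : V * V⁻¹ = 1 := Matrix.mul_nonsing_inv V (isUnit_iff_ne_zero.mpr hV.det_pos.ne')
  set e : Fin p → ℝ := Pi.single i 1 with he
  set a := S *ᵥ e with ha
  set b := S *ᵥ (V⁻¹ *ᵥ e) with hb
  have hmove : ∀ x y : Fin p → ℝ, (S *ᵥ x) ⬝ᵥ y = x ⬝ᵥ (S *ᵥ y) := by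
    intro x y
    calc (S *ᵥ x) ⬝ᵥ y = y ⬝ᵥ (S *ᵥ x) := dotProduct_comm _ _
      _ = (y ᵥ* S) ⬝ᵥ x := Matrix.dotProduct_mulVec _ _ _
      _ = (Sᵀ *ᵥ y) ⬝ᵥ x := by rw [Matrix.mulVec_transpose]
      _ = (S *ᵥ y) ⬝ᵥ x := by rw [hSt]
      _ = x ⬝ᵥ (S *ᵥ y) := dotProduct_comm _ _
  have key : ∀ x : Fin p → ℝ, (S *ᵥ x) ⬝ᵥ (S *ᵥ x) = x ⬝ᵥ (V *ᵥ x) := by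
    intro x
    rw [hmove, Matrix.mulVec_mulVec, hSS]
  have hab : a ⬝ᵥ b = 1 := by
    rw [ha, hb, hmove, Matrix.mulVec_mulVec, Matrix.mulVec_mulVec, hSS,
      hVV, Matrix.one_mulVec, he]
    simp
  have haa : a ⬝ᵥ a = V i i := by
    rw [ha, key, he]
    simp [Matrix.mulVec_single]
  have hbb : b ⬝ᵥ b = V⁻¹ i i := by
    rw [hb, key]
    calc (V⁻¹ *ᵥ e) ⬝ᵥ (V *ᵥ (V⁻¹ *ᵥ e))
        = (V⁻¹ *ᵥ e) ⬝ᵥ ((V * V⁻¹) *ᵥ e) := by rw [Matrix.mulVec_mulVec]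
      _ = (V⁻¹ *ᵥ e) ⬝ᵥ e := by rw [hVV, Matrix.one_mulVec]
      _ = V⁻¹ i i := by rw [he]; simp [Matrix.mulVec_single]
  have hcs : (a ⬝ᵥ b) ^ 2 ≤ (a ⬝ᵥ a) * (b ⬝ᵥ b) := by
    simpa only [dotProduct, pow_two, Finset.sum_mul_sum] using
      Finset.sum_mul_sq_le_sq_mul_sq Finset.univ a b
  rw [hab, haa, hbb, one_pow] at hcs
  exact hcs

/-- The limiting optimal tempering parameter for variational approximations,
`α̃* = p / (tr(Ṽ V⁻¹) + ε (θ₀−θ*)ᵀ Ṽ (θ₀−θ*))` with `Ṽ = diag(V)`,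
lies strictly between 0 and 1. -/
theorem alpha_tilde_star_in_unit_interval {p : ℕ} (V : Matrix (Fin p) (Fin p) ℝ)
    (hV : V.PosDef) (θ₀ θs : Fin p → ℝ) (hne : θ₀ ≠ θs) (ε : ℝ) (hε : 0 < ε) :
    0 < (p : ℝ) / (((Matrix.diagonal fun i => V i i) * V⁻¹).trace +
          ε * ((θ₀ - θs) ⬝ᵥ ((Matrix.diagonal fun i => V i i) *ᵥ (θ₀ - θs)))) ∧
      (p : ℝ) / (((Matrix.diagonal fun i => V i i) * V⁻¹).trace +
          ε * ((θ₀ - θs) ⬝ᵥ ((Matrix.diagonal fun i => V i i) *ᵥ (θ₀ - θs)))) < 1 := by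
  have hp : 0 < p := Nat.pos_of_ne_zero (by rintro rfl; exact hne (funext fun i => i.elim0))
  have hdiagpos : ∀ i, 0 < V i i := by
    intro i
    have hx : (Pi.single i 1 : Fin p → ℝ) ≠ 0 := by
      intro h
      have := congrFun h i
      simp at this
    have := hV.dotProduct_mulVec_pos hx
    simpa [Matrix.mulVec_single, single_dotProduct] using this
  have hd0 : θ₀ - θs ≠ 0 := sub_ne_zero.mpr hne
  have hq : 0 < (θ₀ - θs) ⬝ᵥ ((Matrix.diagonal fun i => V i i) *ᵥ (θ₀ - θs)) := by
    have := (Matrix.PosDef.diagonal hdiagpos).dotProduct_mulVec_pos hd0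
    simpa using this
  have hT : (p : ℝ) ≤ ((Matrix.diagonal fun i => V i i) * V⁻¹).trace := by
    have : ((Matrix.diagonal fun i => V i i) * V⁻¹).trace
        = ∑ i : Fin p, V i i * V⁻¹ i i := by
      simp [Matrix.trace, Matrix.diag, Matrix.diagonal_mul]
    rw [this]
    calc (p : ℝ) = ∑ _i : Fin p, (1 : ℝ) := by simp
      _ ≤ ∑ i : Fin p, V i i * V⁻¹ i i :=
        Finset.sum_le_sum fun i _ => one_le_diag_mul_inv_diag hV i
  have hD : (p : ℝ) < ((Matrix.diagonal fun i => V i i) * V⁻¹).trace +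
      ε * ((θ₀ - θs) ⬝ᵥ ((Matrix.diagonal fun i => V i i) *ᵥ (θ₀ - θs))) := by
    nlinarith
  have hppos : (0 : ℝ) < p := by exact_mod_cast hp
  refine ⟨div_pos hppos (lt_trans hppos hD), (div_lt_one (lt_trans hppos hD)).mpr hD⟩
end

section
/- Let ψ and φ be probability densities on ℝ^p that are positive on a compact set K. Then the total variation distance satisfies d_TV(ψ, φ) ≤ sup_{g,h ∈ K} {1 − (φ(h)/ψ(h))(ψ(g)/φ(g))}⁺ + ∫_{ℝ^p \ K} ψ(h) dh + ∫_{ℝ^p \ K} φ(h) dh. -/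
open MeasureTheory

/-- Lemma 1 of the paper: for probability densities `ψ, φ` positive on a compact set `K`,
the total variation distance is bounded by
`sup_{g,h ∈ K} {1 − (φ(h)/ψ(h))(ψ(g)/φ(g))}⁺ + ∫_{Kᶜ} ψ + ∫_{Kᶜ} φ`. -/
theorem tv_bound_lemma {p : ℕ} (ψ φ : (Fin p → ℝ) → ℝ) (K : Set (Fin p → ℝ))
    (hK : IsCompact K)
    (hψ0 : ∀ x, 0 ≤ ψ x) (hφ0 : ∀ x, 0 ≤ φ x)
    (hψi : Integrable ψ) (hφi : Integrable φ)
    (hψ1 : ∫ x, ψ x = 1) (hφ1 : ∫ x, φ x = 1)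
    (hψK : ∀ x ∈ K, 0 < ψ x) (hφK : ∀ x ∈ K, 0 < φ x) :
    (1 / 2) * ∫ x, |ψ x - φ x| ≤
      (⨆ g ∈ K, ⨆ h ∈ K, max 0 (1 - (φ h / ψ h) * (ψ g / φ g))) +
        (∫ x in Kᶜ, ψ x) + ∫ x in Kᶜ, φ x := by
  set F : (Fin p → ℝ) → (Fin p → ℝ) → ℝ :=
    fun g h => max 0 (1 - (φ h / ψ h) * (ψ g / φ g)) with hF
  set S : ℝ := ⨆ g ∈ K, ⨆ h ∈ K, F g h with hS
  set f : (Fin p → ℝ) → ℝ := fun x => max (ψ x - φ x) 0 with hf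
  have hKm : MeasurableSet K := hK.measurableSet
  have hsub : Integrable fun x => ψ x - φ x := hψi.sub hφi
  have hfi : Integrable f := hsub.pos_part
  -- Step A: (1/2) ∫ |ψ - φ| = ∫ f
  have hA : ∫ x, |ψ x - φ x| = 2 * ∫ x, f x := by
    have hpt : ∀ x, |ψ x - φ x| = 2 * f x - (ψ x - φ x) := by
      intro x
      rcases le_or_gt 0 (ψ x - φ x) with h | h
      · rw [abs_of_nonneg h]; simp only [hf, max_eq_left h]; ring
      · rw [abs_of_neg h]; simp only [hf, max_eq_right h.le]; ring
    rw [integral_congr_ae (Filter.Eventually.of_forall hpt)]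
    rw [integral_sub (hfi.const_mul 2) hsub, integral_sub hψi hφi,
      integral_const_mul, hψ1, hφ1]
    ring
  set cψ : ℝ := ∫ x in K, ψ x with hcψ
  set cφ : ℝ := ∫ x in K, φ x with hcφ
  set dψ : ℝ := ∫ x in Kᶜ, ψ x with hdψ
  set dφ : ℝ := ∫ x in Kᶜ, φ x with hdφ
  have hsplitψ : cψ + dψ = 1 := by
    rw [hcψ, hdψ, integral_add_compl hKm hψi, hψ1]
  have hsplitφ : cφ + dφ = 1 := by
    rw [hcφ, hdφ, integral_add_compl hKm hφi, hφ1]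
  have hdψ0 : 0 ≤ dψ := setIntegral_nonneg hKm.compl fun x _ => hψ0 x
  have hdφ0 : 0 ≤ dφ := setIntegral_nonneg hKm.compl fun x _ => hφ0 x
  have hcψ0 : 0 ≤ cψ := setIntegral_nonneg hKm fun x _ => hψ0 x
  have hcφ0 : 0 ≤ cφ := setIntegral_nonneg hKm fun x _ => hφ0 x
  -- ∫ f = ∫_K f + ∫_{Kᶜ} f
  have hBsplit : ∫ x, f x = (∫ x in K, f x) + ∫ x in Kᶜ, f x :=
    (integral_add_compl hKm hfi).symm
  -- Step C : ∫_{Kᶜ} f ≤ dψ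
  have hC : (∫ x in Kᶜ, f x) ≤ dψ := by
    apply setIntegral_mono_on hfi.integrableOn hψi.integrableOn hKm.compl
    intro x _
    exact max_le (by linarith [hφ0 x]) (hψ0 x)
  -- bounds on F
  have hF1 : ∀ g h, F g h ≤ 1 := by
    intro g h
    have : 0 ≤ (φ h / ψ h) * (ψ g / φ g) :=
      mul_nonneg (div_nonneg (hφ0 h) (hψ0 h)) (div_nonneg (hψ0 g) (hφ0 g))
    exact max_le zero_le_one (by linarith)
  have hI1 : ∀ g, (⨆ h ∈ K, F g h) ≤ 1 := fun g =>
    Real.iSup_le (fun h => Real.iSup_le (fun _ => hF1 g h) zero_le_one) zero_le_one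
  rcases K.eq_empty_or_nonempty with hKe | ⟨x0, hx0⟩
  · -- K empty: S = 0, Kᶜ = univ
    subst hKe
    have hS0 : S = 0 := by
      simp [hS]
    have habs : ∫ x, |ψ x - φ x| ≤ ∫ x, (ψ x + φ x) := by
      have habsi : Integrable fun x => |ψ x - φ x| := hsub.abs
      have haddi : Integrable fun x => ψ x + φ x := hψi.add hφi
      apply integral_mono habsi haddi
      intro x
      rw [abs_sub_le_iff]
      constructor <;> simp only [] <;> nlinarith [hψ0 x, hφ0 x]
    rw [integral_add hψi hφi, hψ1, hφ1] at habs
    have h1 : dψ = 1 := by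
      have : cψ = 0 := by simp [hcψ]
      linarith
    have h2 : dφ = 1 := by
      have : cφ = 0 := by simp [hcφ]
      linarith
    rw [hS0, h1, h2]
    linarith
  · -- K nonempty
    have hle_S : ∀ g ∈ K, ∀ h ∈ K, F g h ≤ S := by
      intro g hg h hh
      have bdd1 : BddAbove (Set.range fun h => ⨆ _ : h ∈ K, F g h) := by
        refine ⟨1, ?_⟩
        rintro x ⟨h', rfl⟩
        exact Real.iSup_le (fun _ => hF1 g h') zero_le_one
      have h1 : F g h ≤ ⨆ h ∈ K, F g h := by
        have e : (⨆ _ : h ∈ K, F g h) = F g h := ciSup_pos hh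
        rw [← e]
        exact le_ciSup bdd1 h
      have bdd2 : BddAbove (Set.range fun g => ⨆ _ : g ∈ K, ⨆ h ∈ K, F g h) := by
        refine ⟨1, ?_⟩
        rintro x ⟨g', rfl⟩
        exact Real.iSup_le (fun _ => hI1 g') zero_le_one
      have h2 : (⨆ h ∈ K, F g h) ≤ S := by
        have e : (⨆ _ : g ∈ K, ⨆ h ∈ K, F g h) = ⨆ h ∈ K, F g h := ciSup_pos hg
        rw [hS, ← e]
        exact le_ciSup bdd2 g
      exact h1.trans h2
    have hS0 : 0 ≤ S := le_trans (le_max_left _ _) (hle_S x0 hx0 x0 hx0)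
    -- Step D pointwise: for h ∈ K, f h ≤ (S + dφ) * ψ h
    have hDpt : ∀ h ∈ K, f h ≤ (S + dφ) * ψ h := by
      intro h hh
      have hψh := hψK h hh
      have hkey : ∀ g ∈ K, ψ h * φ g - φ h * ψ g ≤ S * (ψ h * φ g) := by
        intro g hg
        have hφg := hφK g hg
        have h1 : 1 - (φ h / ψ h) * (ψ g / φ g) ≤ S :=
          le_trans (le_max_right _ _) (hle_S g hg h hh)
        have h2 : (1 - (φ h / ψ h) * (ψ g / φ g)) * (ψ h * φ g) = ψ h * φ g - φ h * ψ g := by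
          field_simp
        nlinarith [mul_le_mul_of_nonneg_right h1 (mul_pos hψh hφg).le]
      have hint : (∫ g in K, (ψ h * φ g - φ h * ψ g)) ≤ ∫ g in K, S * (ψ h * φ g) := by
        apply setIntegral_mono_on
          ((hφi.const_mul (ψ h)).sub (hψi.const_mul (φ h))).integrableOn
          ((hφi.const_mul (ψ h)).const_mul S).integrableOn hKm
        intro g hg
        exact hkey g hg
      have hlhs : (∫ g in K, (ψ h * φ g - φ h * ψ g)) = ψ h * cφ - φ h * cψ := by
        have i1 : IntegrableOn (fun g => ψ h * φ g) K := (hφi.const_mul (ψ h)).integrableOn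
        have i2 : IntegrableOn (fun g => φ h * ψ g) K := (hψi.const_mul (φ h)).integrableOn
        rw [integral_sub i1 i2, integral_const_mul, integral_const_mul]
      have hrhs : (∫ g in K, S * (ψ h * φ g)) = S * (ψ h * cφ) := by
        rw [integral_const_mul, integral_const_mul]
      rw [hlhs, hrhs] at hint
      have hdiff : ψ h - φ h ≤ (S + dφ) * ψ h := by
        have e1 : ψ h - φ h = ψ h * (cφ + dφ) - φ h * (cψ + dψ) := by
          rw [hsplitψ, hsplitφ]; ring
        nlinarith [hφ0 h, mul_nonneg (hφ0 h) hdψ0, mul_nonneg (mul_nonneg hS0 hψh.le)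
          (by linarith : (0:ℝ) ≤ 1 - cφ)]
      exact max_le hdiff (mul_nonneg (by linarith) (hψ0 h))
    -- Step D: ∫_K f ≤ S + dφ
    have hD : (∫ x in K, f x) ≤ S + dφ := by
      have h1 : (∫ x in K, f x) ≤ ∫ x in K, (S + dφ) * ψ x := by
        apply setIntegral_mono_on hfi.integrableOn (hψi.const_mul _).integrableOn hKm
        exact hDpt
      have h2 : (∫ x in K, (S + dφ) * ψ x) = (S + dφ) * cψ := integral_const_mul _ _
      rw [h2] at h1
      nlinarith [mul_nonneg (by linarith : (0:ℝ) ≤ S + dφ) (by linarith : (0:ℝ) ≤ 1 - cψ)]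
    rw [hA]
    linarith
end

section
/- Let V be p×p symmetric positive definite, α ∈ (0,1], ε ≥ 0, θ₀, θ* ∈ ℝ^p, and define r_∞(α) = (1/2)(αp + αε(θ₀−θ*)ᵀV(θ₀−θ*) − p log α − p). Then the minimum value of r_∞ over α > 0 equals (p/2) log(1 + (ε/p)(θ₀−θ*)ᵀV(θ₀−θ*)), i.e., 2·min_α r_∞(α) = −p log p + p log(p + ε(θ₀−θ*)ᵀV(θ₀−θ*)). -/
open Matrix

/-- The limiting surrogate expected KL
`r_∞(α) = (1/2)(αp + αεc − p log α − p)` with `c = (θ₀−θ*)ᵀV(θ₀−θ*)` is minimized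
over `α > 0` at `α* = p/(p+εc)`, and `2·min = −p log p + p log(p + εc)`. -/
theorem r_infty_min_value {p : ℕ} (hp : 0 < p) (V : Matrix (Fin p) (Fin p) ℝ)
    (hV : V.PosDef) (θ₀ θs : Fin p → ℝ) (ε : ℝ) (hε : 0 ≤ ε) :
    (∀ α : ℝ, 0 < α →
      (1 / 2) * (((p : ℝ) / (p + ε * ((θ₀ - θs) ⬝ᵥ (V *ᵥ (θ₀ - θs))))) * p +
          ((p : ℝ) / (p + ε * ((θ₀ - θs) ⬝ᵥ (V *ᵥ (θ₀ - θs))))) *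
            (ε * ((θ₀ - θs) ⬝ᵥ (V *ᵥ (θ₀ - θs)))) -
          (p : ℝ) * Real.log ((p : ℝ) / (p + ε * ((θ₀ - θs) ⬝ᵥ (V *ᵥ (θ₀ - θs))))) - p) ≤
        (1 / 2) * (α * p + α * (ε * ((θ₀ - θs) ⬝ᵥ (V *ᵥ (θ₀ - θs)))) -
          (p : ℝ) * Real.log α - p)) ∧
    2 * ((1 / 2) * (((p : ℝ) / (p + ε * ((θ₀ - θs) ⬝ᵥ (V *ᵥ (θ₀ - θs))))) * p +
          ((p : ℝ) / (p + ε * ((θ₀ - θs) ⬝ᵥ (V *ᵥ (θ₀ - θs))))) *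
            (ε * ((θ₀ - θs) ⬝ᵥ (V *ᵥ (θ₀ - θs)))) -
          (p : ℝ) * Real.log ((p : ℝ) / (p + ε * ((θ₀ - θs) ⬝ᵥ (V *ᵥ (θ₀ - θs))))) - p)) =
      -(p : ℝ) * Real.log p +
        (p : ℝ) * Real.log ((p : ℝ) + ε * ((θ₀ - θs) ⬝ᵥ (V *ᵥ (θ₀ - θs)))) := by
  set q : ℝ := (θ₀ - θs) ⬝ᵥ (V *ᵥ (θ₀ - θs)) with hq
  have hq0 : 0 ≤ q := by
    have h := hV.posSemidef.re_dotProduct_nonneg (θ₀ - θs)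
    rw [hq]; simpa only [RCLike.re_to_real, star_trivial] using h
  have hc0 : 0 ≤ ε * q := mul_nonneg hε hq0
  have hpR : (0:ℝ) < (p:ℝ) := by exact_mod_cast hp
  have hs : (0:ℝ) < (p:ℝ) + ε * q := by linarith
  have hα : (0:ℝ) < (p:ℝ) / ((p:ℝ) + ε * q) := div_pos hpR hs
  have hlog : Real.log ((p:ℝ) / ((p:ℝ) + ε * q)) =
      Real.log p - Real.log ((p:ℝ) + ε * q) := Real.log_div (ne_of_gt hpR) (ne_of_gt hs)
  have hsum : ((p:ℝ) / ((p:ℝ) + ε * q)) * p + ((p:ℝ) / ((p:ℝ) + ε * q)) * (ε * q) = p := by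
    field_simp
  constructor
  · intro α hα0
    rw [hsum, hlog]
    have h1 : Real.log (α * ((p:ℝ) + ε * q) / p) ≤ α * ((p:ℝ) + ε * q) / p - 1 :=
      Real.log_le_sub_one_of_pos (by positivity)
    have h2 : Real.log (α * ((p:ℝ) + ε * q) / p)
        = Real.log α + Real.log ((p:ℝ) + ε * q) - Real.log p := by
      rw [Real.log_div (by positivity) hpR.ne', Real.log_mul hα0.ne' hs.ne']
    rw [h2, div_sub_one hpR.ne', le_div_iff₀ hpR] at h1
    nlinarith [h1]
  · rw [hsum, hlog]; ring
end

section
/- With r_∞(α) = (1/2)(αp + αεc − p log α − p) where c = (θ₀−θ*)ᵀV(θ₀−θ*) > 0 and ε > 0: the value at α = 1 is r_∞(1) = εc/2, which grows linearly in c, while the optimized value min_α r_∞(α) = (p/2) log(1 + εc/p) grows logarithmically in c; in particular min_α r_∞(α) < r_∞(1) for all c > 0. -/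
open Matrix

/-- With `r_∞(α) = (1/2)(αp + αεc − p log α − p)` and
`c = (θ₀−θ*)ᵀV(θ₀−θ*) > 0`: the value at `α = 1` is `εc/2` (linear in `c`), the
optimal value is `(p/2)log(1 + εc/p)` (logarithmic in `c`), and the optimal value
is strictly smaller than the value at `α = 1`. -/
theorem r_infty_linear_vs_log {p : ℕ} (hp : 0 < p) (V : Matrix (Fin p) (Fin p) ℝ)
    (hV : V.PosDef) (θ₀ θs : Fin p → ℝ) (hne : θ₀ ≠ θs) (ε : ℝ) (hε : 0 < ε) :
    (1 / 2) * ((1 : ℝ) * p + 1 * (ε * ((θ₀ - θs) ⬝ᵥ (V *ᵥ (θ₀ - θs)))) -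
        (p : ℝ) * Real.log 1 - p) = ε * ((θ₀ - θs) ⬝ᵥ (V *ᵥ (θ₀ - θs))) / 2 ∧
    (∀ α : ℝ, 0 < α →
      ((p : ℝ) / 2) * Real.log (1 + ε * ((θ₀ - θs) ⬝ᵥ (V *ᵥ (θ₀ - θs))) / p) ≤
        (1 / 2) * (α * p + α * (ε * ((θ₀ - θs) ⬝ᵥ (V *ᵥ (θ₀ - θs)))) -
          (p : ℝ) * Real.log α - p)) ∧
    ((p : ℝ) / 2) * Real.log (1 + ε * ((θ₀ - θs) ⬝ᵥ (V *ᵥ (θ₀ - θs))) / p) <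
      ε * ((θ₀ - θs) ⬝ᵥ (V *ᵥ (θ₀ - θs))) / 2 := by
  have hpR : (0 : ℝ) < p := Nat.cast_pos.mpr hp
  have hx : θ₀ - θs ≠ 0 := sub_ne_zero.mpr hne
  have hq : 0 < (θ₀ - θs) ⬝ᵥ (V *ᵥ (θ₀ - θs)) := by
    have := hV.dotProduct_mulVec_pos (x := θ₀ - θs) hx
    simpa using this
  set c : ℝ := ε * ((θ₀ - θs) ⬝ᵥ (V *ᵥ (θ₀ - θs))) with hc
  have hcpos : 0 < c := mul_pos hε hq
  have hcp : 0 < 1 + c / p := by positivity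
  refine ⟨by simp [Real.log_one]; ring, ?_, ?_⟩
  · intro α hα
    -- p log α + p log(1+c/p) ≤ α(p+c) - p
    have h1 : Real.log (α * (1 + c / p)) ≤ α * (1 + c / p) - 1 :=
      Real.log_le_sub_one_of_pos (by positivity)
    have h2 : Real.log (α * (1 + c / p)) = Real.log α + Real.log (1 + c / p) :=
      Real.log_mul (ne_of_gt hα) (ne_of_gt hcp)
    have h3 : (p : ℝ) * (Real.log α + Real.log (1 + c / p)) ≤
        (p : ℝ) * (α * (1 + c / p) - 1) := by
      rw [← h2]; exact mul_le_mul_of_nonneg_left h1 hpR.le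
    have h4 : (p : ℝ) * (α * (1 + c / p)) = α * p + α * c := by
      field_simp
    nlinarith [h3, h4]
  · have h1 : Real.log (1 + c / p) < (1 + c / p) - 1 := by
      apply Real.log_lt_sub_one_of_pos hcp
      have : 0 < c / p := by positivity
      linarith
    have h2 : (p : ℝ) / 2 * Real.log (1 + c / p) < (p : ℝ) / 2 * (c / p) := by
      apply mul_lt_mul_of_pos_left _ (by positivity)
      linarith
    have : (p : ℝ) / 2 * (c / p) = c / 2 := by field_simp
    linarith [h2, this.le]
end
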